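/- Fix β > 0. There exists C₀ = C₀(β, m) > 0 such that for every h ∈ L¹_loc(ℝ^{2m}), every x, y ∈ ℝ^{2m}, and every r ∈ ℝ_+³ with y ∈ T(x, βr), one has |(Poi_twist)_r * h(y)| ≤ C₀ M_tube(h)(x), where M_tube(h)(x) = sup_{r ∈ ℝ_+³} |T(x,r)|^{-1} ∫_{T(x,r)} |h|. -/

import Mathlib

open MeasureTheory Metric
open scoped ENNReal

noncomputable section

def tubeZero (m : ℕ) (r : ℝ × ℝ × ℝ) :
    Set (EuclideanSpace ℝ (Fin m) × EuclideanSpace ℝ (Fin m)) :=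
  if r.2.2 ≤ r.1 ∧ r.2.2 ≤ r.2.1 then
    (Metric.ball 0 r.1) ×ˢ (Metric.ball 0 r.2.1)
  else if r.2.1 ≤ r.1 ∧ r.2.1 ≤ r.2.2 then
    {p | ‖p.1 - p.2‖ < r.1 ∧ ‖p.2‖ < r.2.2}
  else
    {p | ‖p.2 - p.1‖ < r.2.1 ∧ ‖p.1‖ < r.2.2}

def tube (m : ℕ) (x : EuclideanSpace ℝ (Fin m) × EuclideanSpace ℝ (Fin m))
    (r : ℝ × ℝ × ℝ) : Set (EuclideanSpace ℝ (Fin m) × EuclideanSpace ℝ (Fin m)) :=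
  {p | p - x ∈ tubeZero m r}

/-- The Euclidean Poisson kernel `Poi_s(v) = c s / (s² + |v|²)^{(m+1)/2}`. -/
def poiKer (m : ℕ) (c s : ℝ) (v : EuclideanSpace ℝ (Fin m)) : ℝ :=
  c * s / (s ^ 2 + ‖v‖ ^ 2) ^ (((m : ℝ) + 1) / 2)

/-- The twisted Poisson kernel `(Poi_twist)_r`. -/
def twPoi (m : ℕ) (c : ℝ) (r : ℝ × ℝ × ℝ)
    (x : EuclideanSpace ℝ (Fin m) × EuclideanSpace ℝ (Fin m)) : ℝ :=
  ∫ u : EuclideanSpace ℝ (Fin m),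
    poiKer m c r.1 (x.1 - u) * poiKer m c r.2.1 (x.2 - u) * poiKer m c r.2.2 u

/-- Convolution `(Poi_twist)_r * h`. -/
def twConv (m : ℕ) (c : ℝ) (r : ℝ × ℝ × ℝ)
    (h : EuclideanSpace ℝ (Fin m) × EuclideanSpace ℝ (Fin m) → ℝ)
    (y : EuclideanSpace ℝ (Fin m) × EuclideanSpace ℝ (Fin m)) : ℝ :=
  ∫ z, twPoi m c r (y - z) * h z

/-- The tube maximal function. -/
def tubeMaximal (m : ℕ)
    (h : EuclideanSpace ℝ (Fin m) × EuclideanSpace ℝ (Fin m) → ℝ)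
    (x : EuclideanSpace ℝ (Fin m) × EuclideanSpace ℝ (Fin m)) : ℝ≥0∞ :=
  ⨆ r : {r : ℝ × ℝ × ℝ // 0 < r.1 ∧ 0 < r.2.1 ∧ 0 < r.2.2},
    (volume (tube m x r.1))⁻¹ * ∫⁻ z in tube m x r.1, ENNReal.ofReal |h z|

namespace TwistAux

/-- simplified kernel -/
def qk (m : ℕ) (c s t : ℝ) : ℝ := c * s / (s + t) ^ (m + 1)

lemma qk_nonneg {m : ℕ} {c s t : ℝ} (hc : 0 ≤ c) (hs : 0 < s) (ht : 0 ≤ t) :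
    0 ≤ qk m c s t := by
  unfold qk; positivity

lemma poiKer_nonneg {m : ℕ} {c s : ℝ} (hc : 0 ≤ c) (hs : 0 ≤ s)
    (v : EuclideanSpace ℝ (Fin m)) : 0 ≤ poiKer m c s v := by
  unfold poiKer; positivity

lemma rpow_bridge_le {m : ℕ} {s t : ℝ} (hs : 0 ≤ s) (ht : 0 ≤ t) :
    (s ^ 2 + t ^ 2) ^ (((m : ℝ) + 1) / 2) ≤ (s + t) ^ (m + 1) := by
  have h1 : s ^ 2 + t ^ 2 ≤ (s + t) ^ 2 := by nlinarith
  have h2 : (0:ℝ) ≤ s ^ 2 + t ^ 2 := by positivity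
  have he : (0:ℝ) ≤ ((m : ℝ) + 1) / 2 := by positivity
  calc (s ^ 2 + t ^ 2) ^ (((m : ℝ) + 1) / 2)
      ≤ ((s + t) ^ 2) ^ (((m : ℝ) + 1) / 2) := Real.rpow_le_rpow h2 h1 he
    _ = (s + t) ^ (m + 1) := by
        rw [← Real.rpow_natCast (s + t) 2, ← Real.rpow_mul (by linarith)]
        rw [show ((2:ℕ):ℝ) * (((m : ℝ) + 1) / 2) = ((m + 1 : ℕ) : ℝ) by push_cast; ring]
        exact Real.rpow_natCast _ _

lemma rpow_bridge_ge {m : ℕ} {s t : ℝ} (hs : 0 ≤ s) (ht : 0 ≤ t) :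
    (s + t) ^ (m + 1) ≤ 2 ^ (m + 1) * (s ^ 2 + t ^ 2) ^ (((m : ℝ) + 1) / 2) := by
  have h1 : (s + t) ^ 2 ≤ 2 * (s ^ 2 + t ^ 2) := by nlinarith [sq_nonneg (s - t)]
  have h2 : (0:ℝ) ≤ (s + t) ^ 2 := by positivity
  have he : (0:ℝ) ≤ ((m : ℝ) + 1) / 2 := by positivity
  have key : ((s + t) ^ 2) ^ (((m : ℝ) + 1) / 2) ≤ (2 * (s ^ 2 + t ^ 2)) ^ (((m : ℝ) + 1) / 2) :=
    Real.rpow_le_rpow h2 h1 he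
  have e1 : ((s + t) ^ 2 : ℝ) ^ (((m : ℝ) + 1) / 2) = (s + t) ^ (m + 1) := by
    rw [← Real.rpow_natCast (s + t) 2, ← Real.rpow_mul (by linarith)]
    rw [show ((2:ℕ):ℝ) * (((m : ℝ) + 1) / 2) = ((m + 1 : ℕ) : ℝ) by push_cast; ring]
    exact Real.rpow_natCast _ _
  have e2 : (2 * (s ^ 2 + t ^ 2) : ℝ) ^ (((m : ℝ) + 1) / 2)
      = 2 ^ (((m : ℝ) + 1) / 2) * (s ^ 2 + t ^ 2) ^ (((m : ℝ) + 1) / 2) :=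
    Real.mul_rpow (by norm_num) (by positivity)
  have e3 : (2:ℝ) ^ (((m : ℝ) + 1) / 2) ≤ 2 ^ (m + 1) := by
    rw [← Real.rpow_natCast (2:ℝ) (m + 1)]
    apply Real.rpow_le_rpow_of_exponent_le (by norm_num)
    push_cast
    nlinarith [Nat.cast_nonneg (α := ℝ) m]
  calc (s + t) ^ (m + 1) = ((s + t) ^ 2 : ℝ) ^ (((m : ℝ) + 1) / 2) := e1.symm
    _ ≤ (2 * (s ^ 2 + t ^ 2)) ^ (((m : ℝ) + 1) / 2) := key
    _ = 2 ^ (((m : ℝ) + 1) / 2) * (s ^ 2 + t ^ 2) ^ (((m : ℝ) + 1) / 2) := e2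
    _ ≤ 2 ^ (m + 1) * (s ^ 2 + t ^ 2) ^ (((m : ℝ) + 1) / 2) := by
        apply mul_le_mul_of_nonneg_right e3 (by positivity)

lemma poiKer_le_qk {m : ℕ} {c s : ℝ} (hc : 0 ≤ c) (hs : 0 < s)
    (v : EuclideanSpace ℝ (Fin m)) :
    poiKer m c s v ≤ 2 ^ (m + 1) * qk m c s ‖v‖ := by
  have ht : (0:ℝ) ≤ ‖v‖ := norm_nonneg _
  have hD : (0:ℝ) < (s ^ 2 + ‖v‖ ^ 2) ^ (((m : ℝ) + 1) / 2) :=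
    Real.rpow_pos_of_pos (by positivity) _
  have hN : (0:ℝ) < (s + ‖v‖) ^ (m + 1) := by positivity
  unfold poiKer qk
  rw [div_le_iff₀ hD, mul_comm ((2:ℝ) ^ (m+1)) _, mul_assoc, div_mul_eq_mul_div, le_div_iff₀ hN]
  have h := rpow_bridge_ge (m := m) hs.le ht
  nlinarith [mul_le_mul_of_nonneg_left h (mul_nonneg hc hs.le)]
  
lemma qk_le_poiKer {m : ℕ} {c s : ℝ} (hc : 0 ≤ c) (hs : 0 < s)
    (v : EuclideanSpace ℝ (Fin m)) :
    qk m c s ‖v‖ ≤ poiKer m c s v := by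
  have ht : (0:ℝ) ≤ ‖v‖ := norm_nonneg _
  have hD : (0:ℝ) < (s ^ 2 + ‖v‖ ^ 2) ^ (((m : ℝ) + 1) / 2) :=
    Real.rpow_pos_of_pos (by positivity) _
  unfold poiKer qk
  exact div_le_div_of_nonneg_left (by positivity) hD (rpow_bridge_le hs.le ht)

lemma pw_bound {m : ℕ} {c a b : ℝ} (hc : 0 ≤ c) (ha : 0 < a) (hb : 0 < b)
    (v₁ v₂ : EuclideanSpace ℝ (Fin m)) :
    qk m c a ‖v₁‖ * qk m c b ‖v₂‖ ≤
      2 ^ (m + 1) * qk m c (a + b) ‖v₁ + v₂‖ * (qk m c a ‖v₁‖ + qk m c b ‖v₂‖) := by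
  set t₁ := ‖v₁‖ with ht₁
  set t₂ := ‖v₂‖ with ht₂
  have h₁ : (0:ℝ) ≤ t₁ := norm_nonneg _
  have h₂ : (0:ℝ) ≤ t₂ := norm_nonneg _
  have hT : ‖v₁ + v₂‖ ≤ t₁ + t₂ := norm_add_le _ _
  have hT0 : (0:ℝ) ≤ ‖v₁ + v₂‖ := norm_nonneg _
  -- key: if a + t₁ ≥ b + t₂ then qk a t₁ ≤ 2^(m+1) qk (a+b) T
  have key : ∀ (a b t₁ t₂ : ℝ), 0 < a → 0 < b → 0 ≤ t₁ → 0 ≤ t₂ → b + t₂ ≤ a + t₁ →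
      ∀ T, 0 ≤ T → T ≤ t₁ + t₂ →
      qk m c a t₁ ≤ 2 ^ (m + 1) * qk m c (a + b) T := by
    intro a b t₁ t₂ ha hb h₁ h₂ hle T hT0 hTle
    have hd1 : (0:ℝ) < (a + t₁) ^ (m + 1) := by positivity
    have hd2 : (0:ℝ) < (a + b + T) ^ (m + 1) := by positivity
    have hstep : (a + b + T) ^ (m + 1) ≤ 2 ^ (m + 1) * (a + t₁) ^ (m + 1) := by
      rw [← mul_pow]
      apply pow_le_pow_left₀ (by linarith) (by linarith)
    unfold qk
    rw [div_le_iff₀ hd1, mul_comm ((2:ℝ)^(m+1)) _, mul_assoc, div_mul_eq_mul_div,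
      mul_comm ((2:ℝ)^(m+1)) _, ← mul_assoc, le_div_iff₀ hd2]
    calc c * a * (a + b + T) ^ (m + 1)
        ≤ c * a * (2 ^ (m + 1) * (a + t₁) ^ (m + 1)) := by
          apply mul_le_mul_of_nonneg_left hstep (by positivity)
      _ = c * a * 2 ^ (m + 1) * (a + t₁) ^ (m + 1) := by ring
      _ ≤ c * (a + b) * (a + t₁) ^ (m + 1) * 2 ^ (m + 1) := by
          have h1 : c * a ≤ c * (a + b) := by nlinarith
          have h2 : (0:ℝ) < (a + t₁) ^ (m + 1) * 2 ^ (m + 1) := by positivity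
          calc c * a * 2 ^ (m + 1) * (a + t₁) ^ (m + 1)
              = c * a * ((a + t₁) ^ (m + 1) * 2 ^ (m + 1)) := by ring
            _ ≤ c * (a + b) * ((a + t₁) ^ (m + 1) * 2 ^ (m + 1)) :=
                mul_le_mul_of_nonneg_right h1 h2.le
            _ = c * (a + b) * (a + t₁) ^ (m + 1) * 2 ^ (m + 1) := by ring
  rcases le_total (b + t₂) (a + t₁) with hcase | hcase
  · have h := key a b t₁ t₂ ha hb h₁ h₂ hcase ‖v₁ + v₂‖ hT0 hT
    have hq2 : 0 ≤ qk m c b t₂ := qk_nonneg hc hb h₂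
    have hq1 : 0 ≤ qk m c a t₁ := qk_nonneg hc ha h₁
    calc qk m c a t₁ * qk m c b t₂
        ≤ (2 ^ (m + 1) * qk m c (a + b) ‖v₁ + v₂‖) * qk m c b t₂ :=
          mul_le_mul_of_nonneg_right h hq2
      _ ≤ (2 ^ (m + 1) * qk m c (a + b) ‖v₁ + v₂‖) * (qk m c a t₁ + qk m c b t₂) := by
          apply mul_le_mul_of_nonneg_left (by linarith)
          exact mul_nonneg (by positivity) (qk_nonneg hc (by linarith) hT0)
  · have hT' : ‖v₁ + v₂‖ ≤ t₂ + t₁ := by linarith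
    have h := key b a t₂ t₁ hb ha h₂ h₁ hcase ‖v₁ + v₂‖ hT0 hT'
    rw [add_comm b a] at h
    have hq1 : 0 ≤ qk m c a t₁ := qk_nonneg hc ha h₁
    calc qk m c a t₁ * qk m c b t₂
        ≤ qk m c a t₁ * (2 ^ (m + 1) * qk m c (a + b) ‖v₁ + v₂‖) :=
          mul_le_mul_of_nonneg_left h hq1
      _ = (2 ^ (m + 1) * qk m c (a + b) ‖v₁ + v₂‖) * qk m c a t₁ := by ring
      _ ≤ (2 ^ (m + 1) * qk m c (a + b) ‖v₁ + v₂‖) * (qk m c a t₁ + qk m c b t₂) := by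
          have hq2 : 0 ≤ qk m c b t₂ := qk_nonneg hc hb h₂
          apply mul_le_mul_of_nonneg_left (by linarith)
          exact mul_nonneg (by positivity) (qk_nonneg hc (by linarith) hT0)


section Meas

variable {m : ℕ} {c : ℝ}

local notation "E" => EuclideanSpace ℝ (Fin m)

lemma volume_univ_dim0 : volume (Set.univ : Set (EuclideanSpace ℝ (Fin 0))) = 1 := by
  have h := (EuclideanSpace.volume_preserving_symm_measurableEquiv_toLp (Fin 0)).measure_preimage
    (MeasurableSet.univ.nullMeasurableSet)
  have h2 : volume (Set.univ : Set (Fin 0 → ℝ)) = 1 := by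
    rw [volume_pi, Measure.pi_univ]; simp
  simpa [h2] using h

lemma volume_ball_eq (x : E) {R : ℝ} (hR : 0 < R) :
    volume (ball x R) = ENNReal.ofReal (R ^ m) * volume (ball (0 : E) 1) := by
  cases m with
  | zero =>
      have hball : ∀ (y : EuclideanSpace ℝ (Fin 0)) (r : ℝ), 0 < r →
          ball y r = Set.univ := by
        intro y r hr
        ext z
        simp only [mem_ball, Set.mem_univ, iff_true]
        rw [Subsingleton.elim z y]
        simpa using hr
      rw [hball x R hR, hball 0 1 one_pos, volume_univ_dim0]
      simp
  | succ k =>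
      rw [Measure.addHaar_ball _ _ hR.le]
      congr 2
      rw [finrank_euclideanSpace_fin]

lemma setOf_norm_sub_eq_ball (x : E) (R : ℝ) :
    {u : E | ‖x - u‖ < R} = ball x R := by
  ext u
  simp [mem_ball, dist_eq_norm, norm_sub_rev]

lemma pow_helper (m j : ℕ) : ((2:ℝ)⁻¹) ^ ((m + 1) * j) * ((2:ℝ) ^ j) ^ m = (2⁻¹) ^ j := by
  have h1 : ((2:ℝ)⁻¹) ^ ((m + 1) * j) = (2⁻¹) ^ (j * m) * (2⁻¹) ^ j := by
    rw [← pow_add]; congr 1; ring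
  rw [h1, ← pow_mul]
  have h2 : ((2:ℝ)⁻¹) ^ (j * m) * (2:ℝ) ^ (j * m) = 1 := by
    rw [← mul_pow]; norm_num
  calc (2⁻¹:ℝ) ^ (j * m) * 2⁻¹ ^ j * 2 ^ (j * m)
      = ((2⁻¹:ℝ) ^ (j * m) * 2 ^ (j * m)) * 2⁻¹ ^ j := by ring
    _ = (2⁻¹:ℝ) ^ j := by rw [h2, one_mul]

lemma dyadic_qk (hc : 0 ≤ c) {s : ℝ} (hs : 0 < s) {t : ℝ} (ht : 0 ≤ t) :
    ENNReal.ofReal (qk m c s t) ≤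
      ∑' j : ℕ, if t < 2 ^ j * s then
        ENNReal.ofReal (((2:ℝ)⁻¹) ^ ((m + 1) * j) * (c * 2 ^ (m + 1) / s ^ m)) else 0 := by
  have hex : ∃ j : ℕ, t < 2 ^ j * s := by
    obtain ⟨n, hn⟩ := pow_unbounded_of_one_lt (t / s) (one_lt_two (α := ℝ))
    exact ⟨n, by rwa [div_lt_iff₀ hs] at hn⟩
  set j₀ := Nat.find hex with hj₀def
  have hj₀ : t < 2 ^ j₀ * s := Nat.find_spec hex
  refine le_trans ?_ (ENNReal.le_tsum j₀)
  rw [if_pos hj₀]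
  apply ENNReal.ofReal_le_ofReal
  have hden : (0:ℝ) < (s + t) ^ (m + 1) := by positivity
  rcases Nat.eq_zero_or_pos j₀ with h0 | hpos
  · rw [h0]
    simp only [Nat.mul_zero, pow_zero, one_mul]
    have h1 : s ^ (m + 1) ≤ (s + t) ^ (m + 1) := by
      apply pow_le_pow_left₀ hs.le (by linarith)
    calc qk m c s t ≤ c * s / s ^ (m + 1) := by
          unfold qk
          exact div_le_div_of_nonneg_left (by positivity) (by positivity) h1
      _ = c / s ^ m := by
          rw [pow_succ]
          field_simp
      _ ≤ c * 2 ^ (m + 1) / s ^ m := by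
          apply div_le_div_of_nonneg_right ?_ (by positivity)
          nlinarith [pow_pos (show (0:ℝ) < 2 by norm_num) (m+1),
            one_le_pow₀ (one_le_two (α := ℝ)) (n := m+1)]
  · obtain ⟨k, hk⟩ : ∃ k, j₀ = k + 1 := ⟨j₀ - 1, by omega⟩
    have hmin : ¬ (t < 2 ^ k * s) := by
      have := Nat.find_min hex (m := k) (by omega)
      simpa [hj₀def] using this
    push_neg at hmin
    have hlow : (2:ℝ) ^ k * s ≤ s + t := by linarith
    have hpow : ((2:ℝ) ^ k * s) ^ (m + 1) ≤ (s + t) ^ (m + 1) :=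
      pow_le_pow_left₀ (by positivity) hlow _
    have key : qk m c s t ≤ c * s / ((2 ^ k * s) ^ (m + 1)) := by
      unfold qk
      exact div_le_div_of_nonneg_left (by positivity) (by positivity) hpow
    refine key.trans (le_of_eq ?_)
    rw [hk]
    have hs' := hs.ne'
    rw [mul_pow, ← pow_mul]
    rw [show (m + 1) * (k + 1) = k * (m + 1) + (m + 1) by ring, inv_pow, pow_add]
    field_simp
    ring

end Meas

section Integrals

variable {m : ℕ} {c : ℝ}

local notation "E" => EuclideanSpace ℝ (Fin m)

/-- Uniform bound for the integral of the Poisson kernel. -/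
def KB (m : ℕ) (c : ℝ) : ℝ≥0∞ :=
  ENNReal.ofReal ((2:ℝ) ^ (m + 1)) *
    (ENNReal.ofReal (c * 2 ^ (m + 1)) * volume (ball (0 : EuclideanSpace ℝ (Fin m)) 1) * 2)

lemma KB_ne_top : KB m c ≠ ⊤ := by
  unfold KB
  have hb : volume (ball (0 : EuclideanSpace ℝ (Fin m)) 1) ≠ ⊤ :=
    measure_ball_lt_top.ne
  exact ENNReal.mul_ne_top ENNReal.ofReal_ne_top
    (ENNReal.mul_ne_top (ENNReal.mul_ne_top ENNReal.ofReal_ne_top hb) (by norm_num))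

lemma measurable_poiKer (x : E) {s : ℝ} (hs : 0 < s) :
    Measurable fun u : E => ENNReal.ofReal (poiKer m c s (x - u)) := by
  apply Measurable.ennreal_ofReal
  unfold poiKer
  have hbase : Continuous fun u : E => s ^ 2 + ‖x - u‖ ^ 2 :=
    continuous_const.add (((continuous_const.sub continuous_id).norm).pow 2)
  have hden : Continuous fun u : E => (s ^ 2 + ‖x - u‖ ^ 2) ^ (((m : ℝ) + 1) / 2) :=
    hbase.rpow_const (fun u => Or.inr (by positivity))
  exact (continuous_const.div hden
    (fun u => (Real.rpow_pos_of_pos (by positivity) _).ne')).measurable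

lemma poiKer_sub_rev (s : ℝ) (w z : E) :
    poiKer m c s (w - z) = poiKer m c s (z - w) := by
  unfold poiKer; rw [norm_sub_rev]

lemma lintegral_qk_le (hc : 0 < c) {s : ℝ} (hs : 0 < s) (x : E) :
    ∫⁻ u : E, ENNReal.ofReal (qk m c s ‖x - u‖) ≤
      ENNReal.ofReal (c * 2 ^ (m + 1)) * volume (ball (0 : E) 1) * 2 := by
  set ν₁ := volume (ball (0 : E) 1) with hν₁
  have hterm : ∀ j : ℕ,
      (fun u : E => if ‖x - u‖ < 2 ^ j * s then
        ENNReal.ofReal (((2:ℝ)⁻¹) ^ ((m + 1) * j) * (c * 2 ^ (m + 1) / s ^ m)) else 0)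
      = Set.indicator (ball x (2 ^ j * s))
          (fun _ => ENNReal.ofReal (((2:ℝ)⁻¹) ^ ((m + 1) * j) * (c * 2 ^ (m + 1) / s ^ m))) := by
    intro j
    ext u
    rw [← setOf_norm_sub_eq_ball]
    simp [Set.indicator_apply]
  calc ∫⁻ u : E, ENNReal.ofReal (qk m c s ‖x - u‖)
      ≤ ∫⁻ u : E, ∑' j : ℕ, if ‖x - u‖ < 2 ^ j * s then
          ENNReal.ofReal (((2:ℝ)⁻¹) ^ ((m + 1) * j) * (c * 2 ^ (m + 1) / s ^ m)) else 0 :=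
        lintegral_mono fun u => dyadic_qk hc.le hs (norm_nonneg _)
    _ = ∑' j : ℕ, ∫⁻ u : E, (if ‖x - u‖ < 2 ^ j * s then
          ENNReal.ofReal (((2:ℝ)⁻¹) ^ ((m + 1) * j) * (c * 2 ^ (m + 1) / s ^ m)) else 0) := by
        apply lintegral_tsum
        intro j
        rw [hterm j]
        exact (measurable_const.indicator measurableSet_ball).aemeasurable
    _ = ∑' j : ℕ, (ENNReal.ofReal (c * 2 ^ (m + 1)) * ν₁) * (2⁻¹ : ℝ≥0∞) ^ j := by
        apply tsum_congr
        intro j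
        rw [hterm j, lintegral_indicator_const measurableSet_ball]
        have hR : (0:ℝ) < 2 ^ j * s := by positivity
        rw [volume_ball_eq x hR, ← mul_assoc, ← ENNReal.ofReal_mul (by positivity)]
        have hre : ((2:ℝ)⁻¹) ^ ((m + 1) * j) * (c * 2 ^ (m + 1) / s ^ m) * (2 ^ j * s) ^ m
            = (c * 2 ^ (m + 1)) * ((2:ℝ)⁻¹) ^ j := by
          rw [mul_pow]
          calc ((2:ℝ)⁻¹) ^ ((m + 1) * j) * (c * 2 ^ (m + 1) / s ^ m) * (((2:ℝ) ^ j) ^ m * s ^ m)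
              = (c * 2 ^ (m + 1)) * (((2:ℝ)⁻¹) ^ ((m + 1) * j) * ((2:ℝ) ^ j) ^ m) * (s ^ m / s ^ m) := by
                ring
            _ = (c * 2 ^ (m + 1)) * ((2:ℝ)⁻¹) ^ j := by
                rw [pow_helper, div_self (pow_ne_zero _ hs.ne')]; ring
        rw [hre, ENNReal.ofReal_mul (by positivity), ENNReal.ofReal_pow (by norm_num)]
        rw [ENNReal.ofReal_inv_of_pos (by norm_num)]
        have : ENNReal.ofReal (2:ℝ) = 2 := by norm_num
        rw [this]
        ring
    _ = (ENNReal.ofReal (c * 2 ^ (m + 1)) * ν₁) * ∑' j : ℕ, (2⁻¹ : ℝ≥0∞) ^ j :=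
        ENNReal.tsum_mul_left
    _ = (ENNReal.ofReal (c * 2 ^ (m + 1)) * ν₁) * 2 := by
        rw [ENNReal.tsum_geometric, ENNReal.one_sub_inv_two, inv_inv]
    _ = ENNReal.ofReal (c * 2 ^ (m + 1)) * ν₁ * 2 := by ring

lemma lintegral_poiKer_le (hc : 0 < c) {s : ℝ} (hs : 0 < s) (x : E) :
    ∫⁻ u : E, ENNReal.ofReal (poiKer m c s (x - u)) ≤ KB m c := by
  calc ∫⁻ u : E, ENNReal.ofReal (poiKer m c s (x - u))
      ≤ ∫⁻ u : E, ENNReal.ofReal ((2:ℝ) ^ (m + 1)) * ENNReal.ofReal (qk m c s ‖x - u‖) := by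
        apply lintegral_mono
        intro u
        dsimp only
        rw [← ENNReal.ofReal_mul (by positivity)]
        exact ENNReal.ofReal_le_ofReal (poiKer_le_qk hc.le hs _)
    _ = ENNReal.ofReal ((2:ℝ) ^ (m + 1)) * ∫⁻ u : E, ENNReal.ofReal (qk m c s ‖x - u‖) :=
        lintegral_const_mul' _ _ ENNReal.ofReal_ne_top
    _ ≤ ENNReal.ofReal ((2:ℝ) ^ (m + 1)) *
          (ENNReal.ofReal (c * 2 ^ (m + 1)) * volume (ball (0 : E) 1) * 2) :=
        mul_le_mul_right (lintegral_qk_le hc hs x) _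
    _ = KB m c := rfl

lemma pw_poiKer (hc : 0 < c) {a b : ℝ} (ha : 0 < a) (hb : 0 < b) (v₁ v₂ : E) :
    poiKer m c a v₁ * poiKer m c b v₂ ≤
      2 ^ (3 * (m + 1)) * qk m c (a + b) ‖v₁ + v₂‖ * (poiKer m c a v₁ + poiKer m c b v₂) := by
  have h1 := poiKer_le_qk (m := m) (c := c) hc.le ha v₁
  have h2 := poiKer_le_qk (m := m) (c := c) hc.le hb v₂
  have h3 := pw_bound (m := m) (c := c) hc.le ha hb v₁ v₂
  have h4 := qk_le_poiKer (m := m) (c := c) hc.le ha v₁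
  have h5 := qk_le_poiKer (m := m) (c := c) hc.le hb v₂
  have hq1 : 0 ≤ qk m c a ‖v₁‖ := qk_nonneg hc.le ha (norm_nonneg _)
  have hq2 : 0 ≤ qk m c b ‖v₂‖ := qk_nonneg hc.le hb (norm_nonneg _)
  have hqs : 0 ≤ qk m c (a + b) ‖v₁ + v₂‖ := qk_nonneg hc.le (by linarith) (norm_nonneg _)
  have hp1 : 0 ≤ poiKer m c a v₁ := poiKer_nonneg hc.le ha.le _
  have hp2 : 0 ≤ poiKer m c b v₂ := poiKer_nonneg hc.le hb.le _
  have hpow : (0:ℝ) < 2 ^ (m + 1) := by positivity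
  calc poiKer m c a v₁ * poiKer m c b v₂
      ≤ (2 ^ (m + 1) * qk m c a ‖v₁‖) * (2 ^ (m + 1) * qk m c b ‖v₂‖) := by
        apply mul_le_mul h1 h2 hp2 (by positivity)
    _ = (2 ^ (m + 1) * 2 ^ (m + 1)) * (qk m c a ‖v₁‖ * qk m c b ‖v₂‖) := by ring
    _ ≤ (2 ^ (m + 1) * 2 ^ (m + 1)) *
          (2 ^ (m + 1) * qk m c (a + b) ‖v₁ + v₂‖ * (qk m c a ‖v₁‖ + qk m c b ‖v₂‖)) := by
        apply mul_le_mul_of_nonneg_left h3 (by positivity)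
    _ ≤ (2 ^ (m + 1) * 2 ^ (m + 1)) *
          (2 ^ (m + 1) * qk m c (a + b) ‖v₁ + v₂‖ * (poiKer m c a v₁ + poiKer m c b v₂)) := by
        apply mul_le_mul_of_nonneg_left ?_ (by positivity)
        apply mul_le_mul_of_nonneg_left (add_le_add h4 h5)
        positivity
    _ = 2 ^ (3 * (m + 1)) * qk m c (a + b) ‖v₁ + v₂‖ *
          (poiKer m c a v₁ + poiKer m c b v₂) := by
        rw [show 3 * (m + 1) = (m + 1) + ((m + 1) + (m + 1)) by ring, pow_add, pow_add]
        ring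

lemma conv_bound (hc : 0 < c) {a b : ℝ} (ha : 0 < a) (hb : 0 < b) (x₁ x₂ : E) :
    ∫⁻ u : E, ENNReal.ofReal (poiKer m c a (x₁ - u) * poiKer m c b (x₂ - u)) ≤
      ENNReal.ofReal (2 ^ (3 * (m + 1)) * qk m c (a + b) ‖x₁ - x₂‖) * (KB m c + KB m c) := by
  have hqs : 0 ≤ qk m c (a + b) ‖x₁ - x₂‖ := qk_nonneg hc.le (by linarith) (norm_nonneg _)
  calc ∫⁻ u : E, ENNReal.ofReal (poiKer m c a (x₁ - u) * poiKer m c b (x₂ - u))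
      ≤ ∫⁻ u : E, ENNReal.ofReal (2 ^ (3 * (m + 1)) * qk m c (a + b) ‖x₁ - x₂‖) *
          (ENNReal.ofReal (poiKer m c a (x₁ - u)) + ENNReal.ofReal (poiKer m c b (x₂ - u))) := by
        apply lintegral_mono
        intro u
        dsimp only
        rw [← ENNReal.ofReal_add (poiKer_nonneg hc.le ha.le _) (poiKer_nonneg hc.le hb.le _),
          ← ENNReal.ofReal_mul (by positivity)]
        apply ENNReal.ofReal_le_ofReal
        have h := pw_poiKer (m := m) (c := c) hc ha hb (x₁ - u) (u - x₂)
        rw [show x₁ - u + (u - x₂) = x₁ - x₂ by abel] at h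
        rw [poiKer_sub_rev b x₂ u]
        exact h
    _ = ENNReal.ofReal (2 ^ (3 * (m + 1)) * qk m c (a + b) ‖x₁ - x₂‖) *
          ∫⁻ u : E, (ENNReal.ofReal (poiKer m c a (x₁ - u)) + ENNReal.ofReal (poiKer m c b (x₂ - u))) :=
        lintegral_const_mul' _ _ ENNReal.ofReal_ne_top
    _ ≤ ENNReal.ofReal (2 ^ (3 * (m + 1)) * qk m c (a + b) ‖x₁ - x₂‖) * (KB m c + KB m c) := by
        apply mul_le_mul_right
        rw [lintegral_add_left (measurable_poiKer x₁ ha)]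
        exact add_le_add (lintegral_poiKer_le hc ha x₁) (lintegral_poiKer_le hc hb x₂)

end Integrals

section Kernel

variable {m : ℕ} {c : ℝ}

local notation "E" => EuclideanSpace ℝ (Fin m)

lemma poiKer_neg (s : ℝ) (v : E) : poiKer m c s (-v) = poiKer m c s v := by
  unfold poiKer; rw [norm_neg]

lemma ofReal_abs_twPoi_le (hc : 0 < c) {r : ℝ × ℝ × ℝ}
    (h1 : 0 < r.1) (h2 : 0 < r.2.1) (h3 : 0 < r.2.2) (w : E × E) :
    ENNReal.ofReal |twPoi m c r w| ≤
      ∫⁻ u : E, ENNReal.ofReal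
        (poiKer m c r.1 (w.1 - u) * poiKer m c r.2.1 (w.2 - u) * poiKer m c r.2.2 u) := by
  unfold twPoi
  have hnn : ∀ u : E, 0 ≤ poiKer m c r.1 (w.1 - u) * poiKer m c r.2.1 (w.2 - u) *
      poiKer m c r.2.2 u := fun u =>
    mul_nonneg (mul_nonneg (poiKer_nonneg hc.le h1.le _) (poiKer_nonneg hc.le h2.le _))
      (poiKer_nonneg hc.le h3.le _)
  have h := norm_integral_le_lintegral_norm (μ := (volume : Measure E))
    (fun u : E => poiKer m c r.1 (w.1 - u) * poiKer m c r.2.1 (w.2 - u) * poiKer m c r.2.2 u)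
  calc ENNReal.ofReal |∫ u : E, poiKer m c r.1 (w.1 - u) * poiKer m c r.2.1 (w.2 - u) *
        poiKer m c r.2.2 u|
      ≤ ENNReal.ofReal ((∫⁻ u : E, ENNReal.ofReal
          ‖poiKer m c r.1 (w.1 - u) * poiKer m c r.2.1 (w.2 - u) * poiKer m c r.2.2 u‖).toReal) := by
        apply ENNReal.ofReal_le_ofReal
        rw [← Real.norm_eq_abs]
        exact h
    _ ≤ ∫⁻ u : E, ENNReal.ofReal
          ‖poiKer m c r.1 (w.1 - u) * poiKer m c r.2.1 (w.2 - u) * poiKer m c r.2.2 u‖ :=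
        ENNReal.ofReal_toReal_le
    _ = ∫⁻ u : E, ENNReal.ofReal
          (poiKer m c r.1 (w.1 - u) * poiKer m c r.2.1 (w.2 - u) * poiKer m c r.2.2 u) := by
        apply lintegral_congr
        intro u
        rw [Real.norm_eq_abs, abs_of_nonneg (hnn u)]

lemma twPoi_bound (hc : 0 < c) {r : ℝ × ℝ × ℝ}
    (h1 : 0 < r.1) (h2 : 0 < r.2.1) (h3 : 0 < r.2.2) (w : E × E) :
    ENNReal.ofReal |twPoi m c r w| ≤
      ENNReal.ofReal (2 ^ (3 * (m + 1)) * qk m c (r.1 + r.2.2) ‖w.1‖) *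
        (ENNReal.ofReal (2 ^ (3 * (m + 1)) * qk m c (r.1 + r.2.1) ‖w.1 - w.2‖) * (KB m c + KB m c)
          + ENNReal.ofReal (2 ^ (3 * (m + 1)) * qk m c (r.2.1 + r.2.2) ‖w.2‖) * (KB m c + KB m c)) := by
  have hq13 : 0 ≤ 2 ^ (3 * (m + 1)) * qk m c (r.1 + r.2.2) ‖w.1‖ :=
    mul_nonneg (by positivity) (qk_nonneg hc.le (by linarith) (norm_nonneg _))
  refine le_trans (ofReal_abs_twPoi_le hc h1 h2 h3 w) ?_
  have pointwise : ∀ u : E,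
      ENNReal.ofReal (poiKer m c r.1 (w.1 - u) * poiKer m c r.2.1 (w.2 - u) * poiKer m c r.2.2 u)
      ≤ ENNReal.ofReal (2 ^ (3 * (m + 1)) * qk m c (r.1 + r.2.2) ‖w.1‖) *
          (ENNReal.ofReal (poiKer m c r.1 (w.1 - u)) * ENNReal.ofReal (poiKer m c r.2.1 (w.2 - u))
            + ENNReal.ofReal (poiKer m c r.2.2 u) * ENNReal.ofReal (poiKer m c r.2.1 (w.2 - u))) := by
    intro u
    have hp1 := poiKer_nonneg (m := m) (c := c) hc.le h1.le (w.1 - u)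
    have hp2 := poiKer_nonneg (m := m) (c := c) hc.le h2.le (w.2 - u)
    have hp3 := poiKer_nonneg (m := m) (c := c) hc.le h3.le u
    rw [← ENNReal.ofReal_mul hp1, ← ENNReal.ofReal_mul hp3,
      ← ENNReal.ofReal_add (mul_nonneg hp1 hp2) (mul_nonneg hp3 hp2),
      ← ENNReal.ofReal_mul hq13]
    apply ENNReal.ofReal_le_ofReal
    have h := pw_poiKer (m := m) (c := c) hc h1 h3 (w.1 - u) u
    rw [show w.1 - u + u = w.1 by abel] at h
    calc poiKer m c r.1 (w.1 - u) * poiKer m c r.2.1 (w.2 - u) * poiKer m c r.2.2 u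
        = (poiKer m c r.1 (w.1 - u) * poiKer m c r.2.2 u) * poiKer m c r.2.1 (w.2 - u) := by ring
      _ ≤ (2 ^ (3 * (m + 1)) * qk m c (r.1 + r.2.2) ‖w.1‖ *
            (poiKer m c r.1 (w.1 - u) + poiKer m c r.2.2 u)) * poiKer m c r.2.1 (w.2 - u) :=
          mul_le_mul_of_nonneg_right h hp2
      _ = 2 ^ (3 * (m + 1)) * qk m c (r.1 + r.2.2) ‖w.1‖ *
            (poiKer m c r.1 (w.1 - u) * poiKer m c r.2.1 (w.2 - u)
              + poiKer m c r.2.2 u * poiKer m c r.2.1 (w.2 - u)) := by ring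
  calc ∫⁻ u : E, ENNReal.ofReal
        (poiKer m c r.1 (w.1 - u) * poiKer m c r.2.1 (w.2 - u) * poiKer m c r.2.2 u)
      ≤ ∫⁻ u : E, ENNReal.ofReal (2 ^ (3 * (m + 1)) * qk m c (r.1 + r.2.2) ‖w.1‖) *
          (ENNReal.ofReal (poiKer m c r.1 (w.1 - u)) * ENNReal.ofReal (poiKer m c r.2.1 (w.2 - u))
            + ENNReal.ofReal (poiKer m c r.2.2 u) * ENNReal.ofReal (poiKer m c r.2.1 (w.2 - u))) :=
        lintegral_mono pointwise
    _ = ENNReal.ofReal (2 ^ (3 * (m + 1)) * qk m c (r.1 + r.2.2) ‖w.1‖) *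
          ∫⁻ u : E,
          (ENNReal.ofReal (poiKer m c r.1 (w.1 - u)) * ENNReal.ofReal (poiKer m c r.2.1 (w.2 - u))
            + ENNReal.ofReal (poiKer m c r.2.2 u) * ENNReal.ofReal (poiKer m c r.2.1 (w.2 - u))) :=
        lintegral_const_mul' _ _ ENNReal.ofReal_ne_top
    _ ≤ ENNReal.ofReal (2 ^ (3 * (m + 1)) * qk m c (r.1 + r.2.2) ‖w.1‖) *
          (ENNReal.ofReal (2 ^ (3 * (m + 1)) * qk m c (r.1 + r.2.1) ‖w.1 - w.2‖) * (KB m c + KB m c)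
            + ENNReal.ofReal (2 ^ (3 * (m + 1)) * qk m c (r.2.1 + r.2.2) ‖w.2‖) * (KB m c + KB m c)) := by
        apply mul_le_mul_right
        rw [lintegral_add_left (f := fun u => ENNReal.ofReal (poiKer m c r.1 (w.1 - u)) *
          ENNReal.ofReal (poiKer m c r.2.1 (w.2 - u))) ((measurable_poiKer w.1 h1).mul (measurable_poiKer w.2 h2))]
        apply add_le_add
        · refine le_trans (le_of_eq ?_) (conv_bound hc h1 h2 w.1 w.2)
          apply lintegral_congr
          intro u
          rw [ENNReal.ofReal_mul (poiKer_nonneg hc.le h1.le _)]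
        · have hcb := conv_bound (m := m) hc h2 h3 w.2 0
          rw [sub_zero] at hcb
          refine le_trans (le_of_eq ?_) hcb
          apply lintegral_congr
          intro u
          rw [ENNReal.ofReal_mul (poiKer_nonneg hc.le h2.le _), zero_sub, poiKer_neg, mul_comm]

end Kernel

section Tubes

variable {m : ℕ}

local notation "E" => EuclideanSpace ℝ (Fin m)

lemma tube_mem_iff (x z : E × E) (σ : ℝ × ℝ × ℝ) :
    z ∈ tube m x σ ↔ z - x ∈ tubeZero m σ := Iff.rfl

lemma tubeZero_prod {A B : ℝ} (hA : 0 < A) (hB : 0 < B) :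
    tubeZero m (A, B, min A B) = (ball (0:E) A) ×ˢ (ball (0:E) B) := by
  unfold tubeZero
  rw [if_pos]
  exact ⟨min_le_left _ _, min_le_right _ _⟩

lemma tubeZero_skew {A B : ℝ} (hA : 0 < A) (hB : 0 < B) :
    tubeZero m (min A B / 2, B, A) = {p : E × E | ‖p.2 - p.1‖ < B ∧ ‖p.1‖ < A} := by
  unfold tubeZero
  have hmin : min A B / 2 < A := by
    have := min_le_left A B; linarith
  have hmin' : min A B / 2 < B := by
    have := min_le_right A B; linarith
  rw [if_neg, if_neg]
  · rintro ⟨hb, -⟩; simp only at hb; linarith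
  · rintro ⟨ha, -⟩; simp only at ha; linarith

lemma tube_prod_mem (x z : E × E) {A B : ℝ} (hA : 0 < A) (hB : 0 < B) :
    z ∈ tube m x (A, B, min A B) ↔ ‖z.1 - x.1‖ < A ∧ ‖z.2 - x.2‖ < B := by
  rw [tube_mem_iff, tubeZero_prod hA hB]
  simp [Set.mem_prod, mem_ball, dist_eq_norm, Prod.fst_sub, Prod.snd_sub]

lemma tube_skew_mem (x z : E × E) {A B : ℝ} (hA : 0 < A) (hB : 0 < B) :
    z ∈ tube m x (min A B / 2, B, A) ↔
      ‖(z.1 - x.1) - (z.2 - x.2)‖ < B ∧ ‖z.1 - x.1‖ < A := by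
  rw [tube_mem_iff, tubeZero_skew hA hB]
  constructor
  · rintro ⟨h1, h2⟩
    refine ⟨?_, by simpa [Prod.fst_sub] using h2⟩
    rw [← norm_neg]
    simpa [Prod.fst_sub, Prod.snd_sub, neg_sub] using h1
  · rintro ⟨h1, h2⟩
    refine ⟨?_, by simpa [Prod.fst_sub] using h2⟩
    rw [show (z - x).2 - (z - x).1 = -((z.1 - x.1) - (z.2 - x.2)) by
      simp only [Prod.fst_sub, Prod.snd_sub]; abel, norm_neg]
    exact h1

lemma volume_tube_prod (x : E × E) {A B : ℝ} (hA : 0 < A) (hB : 0 < B) :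
    volume (tube m x (A, B, min A B)) =
      ENNReal.ofReal (A ^ m) * ENNReal.ofReal (B ^ m) *
        (volume (ball (0:E) 1) * volume (ball (0:E) 1)) := by
  have hset : tube m x (A, B, min A B) = (ball x.1 A) ×ˢ (ball x.2 B) := by
    ext z
    rw [tube_prod_mem x z hA hB]
    simp [Set.mem_prod, mem_ball, dist_eq_norm]
  rw [hset, Measure.volume_eq_prod E E, Measure.prod_prod, volume_ball_eq x.1 hA, volume_ball_eq x.2 hB]
  ring

lemma volume_tube_skew (x : E × E) {A B : ℝ} (hA : 0 < A) (hB : 0 < B) :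
    volume (tube m x (min A B / 2, B, A)) =
      ENNReal.ofReal (A ^ m) * ENNReal.ofReal (B ^ m) *
        (volume (ball (0:E) 1) * volume (ball (0:E) 1)) := by
  have hset : tube m x (min A B / 2, B, A) =
      {z : E × E | ‖z.1 - x.1‖ < A} ∩ {z : E × E | ‖(z.1 - x.1) - (z.2 - x.2)‖ < B} := by
    ext z
    rw [tube_skew_mem x z hA hB]
    simp only [Set.mem_inter_iff, Set.mem_setOf_eq]
    tauto
  have hopen1 : IsOpen {z : E × E | ‖z.1 - x.1‖ < A} :=
    isOpen_lt ((continuous_fst.sub continuous_const).norm) continuous_const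
  have hopen2 : IsOpen {z : E × E | ‖(z.1 - x.1) - (z.2 - x.2)‖ < B} :=
    isOpen_lt (((continuous_fst.sub continuous_const).sub
      (continuous_snd.sub continuous_const)).norm) continuous_const
  have hmeas : MeasurableSet (tube m x (min A B / 2, B, A)) := by
    rw [hset]; exact (hopen1.inter hopen2).measurableSet
  rw [Measure.volume_eq_prod E E, Measure.prod_apply hmeas]
  have hslice : ∀ z₁ : E, volume (Prod.mk z₁ ⁻¹' tube m x (min A B / 2, B, A)) =
      Set.indicator (ball x.1 A) (fun _ => volume (ball (0:E) B)) z₁ := by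
    intro z₁
    by_cases hz : z₁ ∈ ball x.1 A
    · have hz' : ‖z₁ - x.1‖ < A := by rwa [mem_ball, dist_eq_norm] at hz
      have : Prod.mk z₁ ⁻¹' tube m x (min A B / 2, B, A) = ball (x.2 + (z₁ - x.1)) B := by
        ext z₂
        rw [Set.mem_preimage, hset]
        simp only [Set.mem_inter_iff, Set.mem_setOf_eq, mem_ball, dist_eq_norm]
        constructor
        · rintro ⟨-, h2⟩
          rw [show z₂ - (x.2 + (z₁ - x.1)) = -((z₁ - x.1) - (z₂ - x.2)) by abel, norm_neg]
          exact h2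
        · intro h2
          refine ⟨hz', ?_⟩
          rw [show (z₁ - x.1) - (z₂ - x.2) = -(z₂ - (x.2 + (z₁ - x.1))) by abel, norm_neg]
          exact h2
      rw [this, Set.indicator_of_mem hz]
      rw [volume_ball_eq _ hB, volume_ball_eq _ hB]
    · have hz' : ¬ (‖z₁ - x.1‖ < A) := by rwa [mem_ball, dist_eq_norm] at hz
      have : Prod.mk z₁ ⁻¹' tube m x (min A B / 2, B, A) = ∅ := by
        ext z₂
        rw [Set.mem_preimage, hset]
        simp only [Set.mem_inter_iff, Set.mem_setOf_eq, Set.mem_empty_iff_false, iff_false]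
        tauto
      rw [this, Set.indicator_of_notMem hz, measure_empty]
  calc ∫⁻ z₁ : E, volume (Prod.mk z₁ ⁻¹' tube m x (min A B / 2, B, A)) ∂volume
      = ∫⁻ z₁ : E, Set.indicator (ball x.1 A) (fun _ => volume (ball (0:E) B)) z₁ ∂volume :=
        lintegral_congr hslice
    _ = volume (ball (0:E) B) * volume (ball x.1 A) :=
        lintegral_indicator_const measurableSet_ball _
    _ = ENNReal.ofReal (A ^ m) * ENNReal.ofReal (B ^ m) *
          (volume (ball (0:E) 1) * volume (ball (0:E) 1)) := by
        rw [volume_ball_eq _ hB, volume_ball_eq _ hA]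
        ring

lemma setLintegral_le_maximal (h : E × E → ℝ) (x : E × E) {σ : ℝ × ℝ × ℝ}
    (hσ : 0 < σ.1 ∧ 0 < σ.2.1 ∧ 0 < σ.2.2)
    (h0 : volume (tube m x σ) ≠ 0) (htop : volume (tube m x σ) ≠ ⊤) :
    ∫⁻ z in tube m x σ, ENNReal.ofReal |h z| ≤
      volume (tube m x σ) * tubeMaximal m h x := by
  have hle : (volume (tube m x σ))⁻¹ * ∫⁻ z in tube m x σ, ENNReal.ofReal |h z| ≤
      tubeMaximal m h x :=
    le_iSup (f := fun ρ : {r : ℝ × ℝ × ℝ // 0 < r.1 ∧ 0 < r.2.1 ∧ 0 < r.2.2} =>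
      (volume (tube m x ρ.1))⁻¹ * ∫⁻ z in tube m x ρ.1, ENNReal.ofReal |h z|) ⟨σ, hσ⟩
  calc ∫⁻ z in tube m x σ, ENNReal.ofReal |h z|
      = volume (tube m x σ) *
          ((volume (tube m x σ))⁻¹ * ∫⁻ z in tube m x σ, ENNReal.ofReal |h z|) := by
        rw [← mul_assoc, ENNReal.mul_inv_cancel h0 htop, one_mul]
    _ ≤ volume (tube m x σ) * tubeMaximal m h x := mul_le_mul_right hle _

end Tubes

section Term

variable {m : ℕ} {c : ℝ}

local notation "E" => EuclideanSpace ℝ (Fin m)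

/-- constant for a single dyadic term family -/
def Cterm (m : ℕ) (c β : ℝ) : ℝ≥0∞ :=
  ENNReal.ofReal (c * 2 ^ (m + 1) * (β + 1) ^ m) *
    ENNReal.ofReal (c * 2 ^ (m + 1) * (β + 1) ^ m) *
    (volume (ball (0 : EuclideanSpace ℝ (Fin m)) 1) *
      volume (ball (0 : EuclideanSpace ℝ (Fin m)) 1)) * 4

lemma Cterm_ne_top {β : ℝ} : Cterm m c β ≠ ⊤ := by
  unfold Cterm
  have hb : volume (ball (0 : EuclideanSpace ℝ (Fin m)) 1) ≠ ⊤ := measure_ball_lt_top.ne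
  exact ENNReal.mul_ne_top (ENNReal.mul_ne_top
    (ENNReal.mul_ne_top ENNReal.ofReal_ne_top ENNReal.ofReal_ne_top)
    (ENNReal.mul_ne_top hb hb)) (by norm_num)

lemma weight_bound (hc : 0 < c) {s β : ℝ} (hs : 0 < s) (hβ : 0 < β) (j : ℕ) :
    ((2:ℝ)⁻¹) ^ ((m + 1) * j) * (c * 2 ^ (m + 1) / s ^ m) * ((β + 2 ^ j) * s) ^ m ≤
      (c * 2 ^ (m + 1) * (β + 1) ^ m) * (2⁻¹) ^ j := by
  have h2j : (1:ℝ) ≤ 2 ^ j := one_le_pow₀ one_le_two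
  have h1 : (β + 2 ^ j) ≤ (β + 1) * 2 ^ j := by nlinarith
  have e1 : ((2:ℝ)⁻¹) ^ ((m + 1) * j) * (c * 2 ^ (m + 1) / s ^ m) * ((β + 2 ^ j) * s) ^ m
      = (c * 2 ^ (m + 1)) * (((2:ℝ)⁻¹) ^ ((m + 1) * j) * (β + 2 ^ j) ^ m) := by
    rw [mul_pow]
    field_simp
  rw [e1]
  have h2 : ((β:ℝ) + 2 ^ j) ^ m ≤ (β + 1) ^ m * ((2:ℝ) ^ j) ^ m := by
    rw [← mul_pow]
    exact pow_le_pow_left₀ (by positivity) h1 m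
  calc (c * 2 ^ (m + 1)) * (((2:ℝ)⁻¹) ^ ((m + 1) * j) * (β + 2 ^ j) ^ m)
      ≤ (c * 2 ^ (m + 1)) * (((2:ℝ)⁻¹) ^ ((m + 1) * j) * ((β + 1) ^ m * ((2:ℝ) ^ j) ^ m)) := by
        apply mul_le_mul_of_nonneg_left ?_ (by positivity)
        apply mul_le_mul_of_nonneg_left h2 (by positivity)
    _ = (c * 2 ^ (m + 1) * (β + 1) ^ m) * (((2:ℝ)⁻¹) ^ ((m + 1) * j) * ((2:ℝ) ^ j) ^ m) := by ring
    _ = (c * 2 ^ (m + 1) * (β + 1) ^ m) * (2⁻¹) ^ j := by rw [pow_helper]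

lemma ofReal_weight_eq {D : ℝ} (hD : 0 ≤ D) (j : ℕ) :
    ENNReal.ofReal (D * (2⁻¹) ^ j) = ENNReal.ofReal D * ((2:ℝ≥0∞)⁻¹) ^ j := by
  rw [ENNReal.ofReal_mul hD, ENNReal.ofReal_pow (by norm_num : (0:ℝ) ≤ 2⁻¹),
    ENNReal.ofReal_inv_of_pos (by norm_num : (0:ℝ) < 2)]
  norm_num

lemma geom_two : ∑' k : ℕ, ((2:ℝ≥0∞)⁻¹) ^ k = 2 := by
  rw [ENNReal.tsum_geometric, ENNReal.one_sub_inv_two, inv_inv]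

lemma term_bound (hc : 0 < c) {β : ℝ} (hβ : 0 < β)
    (h : E × E → ℝ) (hh : AEMeasurable (fun z : E × E => ENNReal.ofReal |h z|) volume)
    (x y : E × E) {sa sb : ℝ} (hsa : 0 < sa) (hsb : 0 < sb)
    (φa φb : E × E → E)
    (hEmeas : ∀ Ra Rb : ℝ, MeasurableSet {z : E × E | ‖φa (y - z)‖ < Ra ∧ ‖φb (y - z)‖ < Rb})
    (htube : ∀ j k : ℕ,
      ∃ σ : ℝ × ℝ × ℝ, (0 < σ.1 ∧ 0 < σ.2.1 ∧ 0 < σ.2.2) ∧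
        {z : E × E | ‖φa (y - z)‖ < 2 ^ j * sa ∧ ‖φb (y - z)‖ < 2 ^ k * sb} ⊆ tube m x σ ∧
        volume (tube m x σ) = ENNReal.ofReal (((β + 2 ^ j) * sa) ^ m) *
          ENNReal.ofReal (((β + 2 ^ k) * sb) ^ m) *
          (volume (ball (0:E) 1) * volume (ball (0:E) 1))) :
    ∫⁻ z : E × E, ENNReal.ofReal (qk m c sa ‖φa (y - z)‖) *
        ENNReal.ofReal (qk m c sb ‖φb (y - z)‖) * ENNReal.ofReal |h z| ≤
      Cterm m c β * tubeMaximal m h x := by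
  set ν₁ := volume (ball (0:E) 1) with hν₁
  set M := tubeMaximal m h x with hM
  set H : E × E → ℝ≥0∞ := fun z => ENNReal.ofReal |h z| with hH
  set Da := ENNReal.ofReal (c * 2 ^ (m + 1) * (β + 1) ^ m) with hDa
  set f : ℕ → E × E → ℝ≥0∞ := fun j z => if ‖φa (y - z)‖ < 2 ^ j * sa then
    ENNReal.ofReal (((2:ℝ)⁻¹) ^ ((m + 1) * j) * (c * 2 ^ (m + 1) / sa ^ m)) else 0 with hf
  set g : ℕ → E × E → ℝ≥0∞ := fun k z => if ‖φb (y - z)‖ < 2 ^ k * sb then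
    ENNReal.ofReal (((2:ℝ)⁻¹) ^ ((m + 1) * k) * (c * 2 ^ (m + 1) / sb ^ m)) else 0 with hg
  have hfg : ∀ j k : ℕ, (fun z : E × E => f j z * (g k z * H z)) =
      fun z : E × E => (ENNReal.ofReal (((2:ℝ)⁻¹) ^ ((m + 1) * j) * (c * 2 ^ (m + 1) / sa ^ m)) *
        ENNReal.ofReal (((2:ℝ)⁻¹) ^ ((m + 1) * k) * (c * 2 ^ (m + 1) / sb ^ m))) *
        Set.indicator {z : E × E | ‖φa (y - z)‖ < 2 ^ j * sa ∧ ‖φb (y - z)‖ < 2 ^ k * sb}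
          H z := by
    intro j k
    funext z
    by_cases ha' : ‖φa (y - z)‖ < 2 ^ j * sa <;> by_cases hb' : ‖φb (y - z)‖ < 2 ^ k * sb <;>
      simp [hf, hg, Set.indicator_apply, ha', hb', mul_assoc]
  have hpt : ∀ z : E × E, ENNReal.ofReal (qk m c sa ‖φa (y - z)‖) *
      ENNReal.ofReal (qk m c sb ‖φb (y - z)‖) * H z ≤
      ∑' p : ℕ × ℕ, f p.1 z * (g p.2 z * H z) := by
    intro z
    have da := dyadic_qk (m := m) (c := c) hc.le hsa (norm_nonneg (φa (y - z)))
    have db := dyadic_qk (m := m) (c := c) hc.le hsb (norm_nonneg (φb (y - z)))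
    calc ENNReal.ofReal (qk m c sa ‖φa (y - z)‖) *
          ENNReal.ofReal (qk m c sb ‖φb (y - z)‖) * H z
        ≤ (∑' j, f j z) * (∑' k, g k z) * H z :=
          mul_le_mul' (mul_le_mul' da db) le_rfl
      _ = ∑' j, f j z * ((∑' k, g k z) * H z) := by
          rw [mul_assoc, ENNReal.tsum_mul_right]
      _ = ∑' j, ∑' k, f j z * (g k z * H z) := by
          apply tsum_congr; intro j
          rw [← ENNReal.tsum_mul_right, ← ENNReal.tsum_mul_left]
      _ = ∑' p : ℕ × ℕ, f p.1 z * (g p.2 z * H z) := ENNReal.tsum_prod.symm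
  have hterm : ∀ p : ℕ × ℕ, ∫⁻ z : E × E, f p.1 z * (g p.2 z * H z) ≤
      (Da * ((2:ℝ≥0∞)⁻¹) ^ p.1) * (Da * ((2:ℝ≥0∞)⁻¹) ^ p.2) * (ν₁ * ν₁ * M) := by
    rintro ⟨j, k⟩
    obtain ⟨σ, hσpos, hσsub, hσvol⟩ := htube j k
    have hν₁0 : ν₁ ≠ 0 := (measure_ball_pos volume 0 one_pos).ne'
    have hν₁top : ν₁ ≠ ⊤ := measure_ball_lt_top.ne
    have hvol0 : volume (tube m x σ) ≠ 0 := by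
      rw [hσvol]
      refine (ENNReal.mul_pos (ENNReal.mul_pos ?_ ?_).ne' (ENNReal.mul_pos hν₁0 hν₁0).ne').ne'
      · exact (ENNReal.ofReal_pos.mpr (by positivity)).ne'
      · exact (ENNReal.ofReal_pos.mpr (by positivity)).ne'
    have hvoltop : volume (tube m x σ) ≠ ⊤ := by
      rw [hσvol]
      exact ENNReal.mul_ne_top (ENNReal.mul_ne_top ENNReal.ofReal_ne_top ENNReal.ofReal_ne_top)
        (ENNReal.mul_ne_top hν₁top hν₁top)
    have hwa : ENNReal.ofReal (((2:ℝ)⁻¹) ^ ((m + 1) * j) * (c * 2 ^ (m + 1) / sa ^ m)) *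
        ENNReal.ofReal (((β + 2 ^ j) * sa) ^ m) ≤ Da * ((2:ℝ≥0∞)⁻¹) ^ j := by
      rw [← ENNReal.ofReal_mul (by positivity)]
      refine le_trans (ENNReal.ofReal_le_ofReal (weight_bound hc hsa hβ j)) ?_
      rw [ofReal_weight_eq (by positivity)]
    have hwb : ENNReal.ofReal (((2:ℝ)⁻¹) ^ ((m + 1) * k) * (c * 2 ^ (m + 1) / sb ^ m)) *
        ENNReal.ofReal (((β + 2 ^ k) * sb) ^ m) ≤ Da * ((2:ℝ≥0∞)⁻¹) ^ k := by
      rw [← ENNReal.ofReal_mul (by positivity)]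
      refine le_trans (ENNReal.ofReal_le_ofReal (weight_bound hc hsb hβ k)) ?_
      rw [ofReal_weight_eq (by positivity)]
    calc ∫⁻ z : E × E, f j z * (g k z * H z)
        = (ENNReal.ofReal (((2:ℝ)⁻¹) ^ ((m + 1) * j) * (c * 2 ^ (m + 1) / sa ^ m)) *
            ENNReal.ofReal (((2:ℝ)⁻¹) ^ ((m + 1) * k) * (c * 2 ^ (m + 1) / sb ^ m))) *
            ∫⁻ z in {z : E × E | ‖φa (y - z)‖ < 2 ^ j * sa ∧ ‖φb (y - z)‖ < 2 ^ k * sb}, H z := by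
          rw [hfg j k]
          rw [lintegral_const_mul' _ _ (ENNReal.mul_ne_top ENNReal.ofReal_ne_top
            ENNReal.ofReal_ne_top)]
          rw [lintegral_indicator (hEmeas _ _)]
      _ ≤ (ENNReal.ofReal (((2:ℝ)⁻¹) ^ ((m + 1) * j) * (c * 2 ^ (m + 1) / sa ^ m)) *
            ENNReal.ofReal (((2:ℝ)⁻¹) ^ ((m + 1) * k) * (c * 2 ^ (m + 1) / sb ^ m))) *
            (volume (tube m x σ) * M) := by
          apply mul_le_mul_right
          exact le_trans (lintegral_mono_set hσsub) (setLintegral_le_maximal h x hσpos hvol0 hvoltop)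
      _ = (ENNReal.ofReal (((2:ℝ)⁻¹) ^ ((m + 1) * j) * (c * 2 ^ (m + 1) / sa ^ m)) *
            ENNReal.ofReal (((β + 2 ^ j) * sa) ^ m)) *
          (ENNReal.ofReal (((2:ℝ)⁻¹) ^ ((m + 1) * k) * (c * 2 ^ (m + 1) / sb ^ m)) *
            ENNReal.ofReal (((β + 2 ^ k) * sb) ^ m)) * (ν₁ * ν₁ * M) := by
          rw [hσvol]; ring
      _ ≤ (Da * ((2:ℝ≥0∞)⁻¹) ^ j) * (Da * ((2:ℝ≥0∞)⁻¹) ^ k) * (ν₁ * ν₁ * M) :=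
          mul_le_mul' (mul_le_mul' hwa hwb) le_rfl
  have hFmeas : ∀ p : ℕ × ℕ, AEMeasurable (fun z : E × E => f p.1 z * (g p.2 z * H z)) volume := by
    rintro ⟨j, k⟩
    rw [hfg j k]
    exact (hh.indicator (hEmeas _ _)).const_mul _
  calc ∫⁻ z : E × E, ENNReal.ofReal (qk m c sa ‖φa (y - z)‖) *
        ENNReal.ofReal (qk m c sb ‖φb (y - z)‖) * H z
      ≤ ∫⁻ z : E × E, ∑' p : ℕ × ℕ, f p.1 z * (g p.2 z * H z) := lintegral_mono hpt
    _ = ∑' p : ℕ × ℕ, ∫⁻ z : E × E, f p.1 z * (g p.2 z * H z) := lintegral_tsum hFmeas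
    _ ≤ ∑' p : ℕ × ℕ, (Da * ((2:ℝ≥0∞)⁻¹) ^ p.1) * (Da * ((2:ℝ≥0∞)⁻¹) ^ p.2) * (ν₁ * ν₁ * M) :=
        ENNReal.tsum_le_tsum hterm
    _ = Cterm m c β * M := by
        rw [ENNReal.tsum_prod (f := fun j k : ℕ =>
          (Da * ((2:ℝ≥0∞)⁻¹) ^ j) * (Da * ((2:ℝ≥0∞)⁻¹) ^ k) * (ν₁ * ν₁ * M))]
        have hinner : ∀ j : ℕ, (∑' k : ℕ, (Da * ((2:ℝ≥0∞)⁻¹) ^ j) * (Da * ((2:ℝ≥0∞)⁻¹) ^ k) *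
            (ν₁ * ν₁ * M)) = (Da * ((2:ℝ≥0∞)⁻¹) ^ j) * Da * (ν₁ * ν₁ * M) * 2 := by
          intro j
          have : ∀ k : ℕ, (Da * ((2:ℝ≥0∞)⁻¹) ^ j) * (Da * ((2:ℝ≥0∞)⁻¹) ^ k) * (ν₁ * ν₁ * M)
              = ((Da * ((2:ℝ≥0∞)⁻¹) ^ j) * Da * (ν₁ * ν₁ * M)) * ((2:ℝ≥0∞)⁻¹) ^ k := by
            intro k; ring
          rw [tsum_congr this, ENNReal.tsum_mul_left, geom_two]
        rw [tsum_congr hinner]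
        have : ∀ j : ℕ, (Da * ((2:ℝ≥0∞)⁻¹) ^ j) * Da * (ν₁ * ν₁ * M) * 2
            = (Da * Da * (ν₁ * ν₁ * M) * 2) * ((2:ℝ≥0∞)⁻¹) ^ j := by
          intro j; ring
        rw [tsum_congr this, ENNReal.tsum_mul_left, geom_two]
        unfold Cterm
        rw [← hν₁, ← hDa]
        ring

end Term

section Inst

variable {m : ℕ} {c : ℝ}

local notation "E" => EuclideanSpace ℝ (Fin m)

lemma tube_coord_bounds {β : ℝ} (hβ : 0 < β) {r : ℝ × ℝ × ℝ}
    (h1 : 0 < r.1) (h2 : 0 < r.2.1) (h3 : 0 < r.2.2) {x y : E × E}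
    (hy : y ∈ tube m x (β * r.1, β * r.2.1, β * r.2.2)) :
    ‖y.1 - x.1‖ < β * (r.1 + r.2.2) ∧ ‖y.2 - x.2‖ < β * (r.2.1 + r.2.2) ∧
      ‖(y.1 - x.1) - (y.2 - x.2)‖ < β * (r.1 + r.2.1) := by
  have hy' : y - x ∈ tubeZero m (β * r.1, β * r.2.1, β * r.2.2) := hy
  unfold tubeZero at hy'
  split_ifs at hy' with hc1 hc2
  · obtain ⟨ha, hb⟩ := hy'
    rw [mem_ball, dist_zero_right] at ha hb
    have ha' : ‖y.1 - x.1‖ < β * r.1 := by simpa [Prod.fst_sub] using ha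
    have hb' : ‖y.2 - x.2‖ < β * r.2.1 := by simpa [Prod.snd_sub] using hb
    refine ⟨lt_of_lt_of_le ha' (by nlinarith), lt_of_lt_of_le hb' (by nlinarith), ?_⟩
    calc ‖(y.1 - x.1) - (y.2 - x.2)‖ ≤ ‖y.1 - x.1‖ + ‖y.2 - x.2‖ := norm_sub_le _ _
      _ < β * (r.1 + r.2.1) := by linarith [ha', hb']
  · simp only [Set.mem_setOf_eq, Prod.fst_sub, Prod.snd_sub] at hy'
    obtain ⟨ha, hb⟩ := hy'
    have hfirst : ‖y.1 - x.1‖ < β * (r.1 + r.2.2) := by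
      calc ‖y.1 - x.1‖ = ‖((y.1 - x.1) - (y.2 - x.2)) + (y.2 - x.2)‖ := by abel_nf
        _ ≤ ‖(y.1 - x.1) - (y.2 - x.2)‖ + ‖y.2 - x.2‖ := norm_add_le _ _
        _ < β * (r.1 + r.2.2) := by linarith [ha, hb]
    exact ⟨hfirst, lt_of_lt_of_le hb (by nlinarith),
      lt_of_lt_of_le ha (by nlinarith)⟩
  · simp only [Set.mem_setOf_eq, Prod.fst_sub, Prod.snd_sub] at hy'
    obtain ⟨ha, hb⟩ := hy'
    have hsecond : ‖y.2 - x.2‖ < β * (r.2.1 + r.2.2) := by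
      calc ‖y.2 - x.2‖ = ‖((y.2 - x.2) - (y.1 - x.1)) + (y.1 - x.1)‖ := by abel_nf
        _ ≤ ‖(y.2 - x.2) - (y.1 - x.1)‖ + ‖y.1 - x.1‖ := norm_add_le _ _
        _ < β * (r.2.1 + r.2.2) := by linarith [ha, hb]
    refine ⟨lt_of_lt_of_le hb (by nlinarith), hsecond, ?_⟩
    rw [← norm_neg, neg_sub]
    exact lt_of_lt_of_le ha (by nlinarith)

lemma termA (hc : 0 < c) {β : ℝ} (hβ : 0 < β)
    (h : E × E → ℝ) (hh : AEMeasurable (fun z : E × E => ENNReal.ofReal |h z|) volume)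
    (x y : E × E) {r : ℝ × ℝ × ℝ} (h1 : 0 < r.1) (h2 : 0 < r.2.1) (h3 : 0 < r.2.2)
    (hy : y ∈ tube m x (β * r.1, β * r.2.1, β * r.2.2)) :
    ∫⁻ z : E × E, ENNReal.ofReal (qk m c (r.1 + r.2.2) ‖(y - z).1‖) *
        ENNReal.ofReal (qk m c (r.1 + r.2.1) ‖(y - z).1 - (y - z).2‖) * ENNReal.ofReal |h z| ≤
      Cterm m c β * tubeMaximal m h x := by
  obtain ⟨hcoord1, hcoord2, hcoord3⟩ := tube_coord_bounds hβ h1 h2 h3 hy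
  have hsa : 0 < r.1 + r.2.2 := by linarith
  have hsb : 0 < r.1 + r.2.1 := by linarith
  have := term_bound (m := m) hc hβ h hh x y hsa hsb
    (fun p => p.1) (fun p => p.1 - p.2) ?_ ?_
  · exact this
  · intro Ra Rb
    have hopen : IsOpen {z : E × E | ‖(y - z).1‖ < Ra ∧ ‖(y - z).1 - (y - z).2‖ < Rb} := by
      rw [Set.setOf_and]
      apply IsOpen.inter
      · exact isOpen_lt ((continuous_fst.comp (continuous_const.sub continuous_id)).norm)
          continuous_const
      · exact isOpen_lt (((continuous_fst.comp (continuous_const.sub continuous_id)).sub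
          (continuous_snd.comp (continuous_const.sub continuous_id))).norm) continuous_const
    exact hopen.measurableSet
  · intro j k
    set A := (β + 2 ^ j) * (r.1 + r.2.2) with hA
    set B := (β + 2 ^ k) * (r.1 + r.2.1) with hB
    have hApos : 0 < A := by
      have : (0:ℝ) < 2 ^ j := by positivity
      apply mul_pos (by linarith) (by linarith)
    have hBpos : 0 < B := by
      have : (0:ℝ) < 2 ^ k := by positivity
      apply mul_pos (by linarith) (by linarith)
    refine ⟨(min A B / 2, B, A), ⟨by positivity, hBpos, hApos⟩, ?_, ?_⟩
    · intro z hz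
      simp only [Set.mem_setOf_eq] at hz
      obtain ⟨hza, hzb⟩ := hz
      rw [tube_skew_mem x z hApos hBpos]
      have e1 : z.1 - x.1 = (y.1 - x.1) - (y - z).1 := by
        simp only [Prod.fst_sub]; abel
      have e2 : (z.1 - x.1) - (z.2 - x.2) =
          ((y.1 - x.1) - (y.2 - x.2)) - ((y - z).1 - (y - z).2) := by
        simp only [Prod.fst_sub, Prod.snd_sub]; abel
      constructor
      · rw [e2]
        calc ‖((y.1 - x.1) - (y.2 - x.2)) - ((y - z).1 - (y - z).2)‖
            ≤ ‖(y.1 - x.1) - (y.2 - x.2)‖ + ‖(y - z).1 - (y - z).2‖ := norm_sub_le _ _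
          _ < β * (r.1 + r.2.1) + 2 ^ k * (r.1 + r.2.1) := by linarith [hcoord3, hzb]
          _ = B := by rw [hB]; ring
      · rw [e1]
        calc ‖(y.1 - x.1) - (y - z).1‖ ≤ ‖y.1 - x.1‖ + ‖(y - z).1‖ := norm_sub_le _ _
          _ < β * (r.1 + r.2.2) + 2 ^ j * (r.1 + r.2.2) := by linarith [hcoord1, hza]
          _ = A := by rw [hA]; ring
    · rw [volume_tube_skew x hApos hBpos]

lemma termB (hc : 0 < c) {β : ℝ} (hβ : 0 < β)
    (h : E × E → ℝ) (hh : AEMeasurable (fun z : E × E => ENNReal.ofReal |h z|) volume)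
    (x y : E × E) {r : ℝ × ℝ × ℝ} (h1 : 0 < r.1) (h2 : 0 < r.2.1) (h3 : 0 < r.2.2)
    (hy : y ∈ tube m x (β * r.1, β * r.2.1, β * r.2.2)) :
    ∫⁻ z : E × E, ENNReal.ofReal (qk m c (r.1 + r.2.2) ‖(y - z).1‖) *
        ENNReal.ofReal (qk m c (r.2.1 + r.2.2) ‖(y - z).2‖) * ENNReal.ofReal |h z| ≤
      Cterm m c β * tubeMaximal m h x := by
  obtain ⟨hcoord1, hcoord2, hcoord3⟩ := tube_coord_bounds hβ h1 h2 h3 hy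
  have hsa : 0 < r.1 + r.2.2 := by linarith
  have hsb : 0 < r.2.1 + r.2.2 := by linarith
  have := term_bound (m := m) hc hβ h hh x y hsa hsb
    (fun p => p.1) (fun p => p.2) ?_ ?_
  · exact this
  · intro Ra Rb
    have hopen : IsOpen {z : E × E | ‖(y - z).1‖ < Ra ∧ ‖(y - z).2‖ < Rb} := by
      rw [Set.setOf_and]
      apply IsOpen.inter
      · exact isOpen_lt ((continuous_fst.comp (continuous_const.sub continuous_id)).norm)
          continuous_const
      · exact isOpen_lt ((continuous_snd.comp (continuous_const.sub continuous_id)).norm)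
          continuous_const
    exact hopen.measurableSet
  · intro j k
    set A := (β + 2 ^ j) * (r.1 + r.2.2) with hA
    set B := (β + 2 ^ k) * (r.2.1 + r.2.2) with hB
    have hApos : 0 < A := by
      have : (0:ℝ) < 2 ^ j := by positivity
      apply mul_pos (by linarith) (by linarith)
    have hBpos : 0 < B := by
      have : (0:ℝ) < 2 ^ k := by positivity
      apply mul_pos (by linarith) (by linarith)
    refine ⟨(A, B, min A B), ⟨hApos, hBpos, lt_min hApos hBpos⟩, ?_, ?_⟩
    · intro z hz
      simp only [Set.mem_setOf_eq] at hz
      obtain ⟨hza, hzb⟩ := hz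
      rw [tube_prod_mem x z hApos hBpos]
      have e1 : z.1 - x.1 = (y.1 - x.1) - (y - z).1 := by
        simp only [Prod.fst_sub]; abel
      have e2 : z.2 - x.2 = (y.2 - x.2) - (y - z).2 := by
        simp only [Prod.snd_sub]; abel
      constructor
      · rw [e1]
        calc ‖(y.1 - x.1) - (y - z).1‖ ≤ ‖y.1 - x.1‖ + ‖(y - z).1‖ := norm_sub_le _ _
          _ < β * (r.1 + r.2.2) + 2 ^ j * (r.1 + r.2.2) := by linarith [hcoord1, hza]
          _ = A := by rw [hA]; ring
      · rw [e2]
        calc ‖(y.2 - x.2) - (y - z).2‖ ≤ ‖y.2 - x.2‖ + ‖(y - z).2‖ := norm_sub_le _ _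
          _ < β * (r.2.1 + r.2.2) + 2 ^ k * (r.2.1 + r.2.2) := by linarith [hcoord2, hzb]
          _ = B := by rw [hB]; ring
    · rw [volume_tube_prod x hApos hBpos]

end Inst

end TwistAux

open TwistAux in
/-- the twisted Poisson integral is dominated, throughout the
twisted cone of aperture `β`, by the tube maximal function at the vertex. -/
theorem twisted_poisson_le_tube_maximal (m : ℕ) (c : ℝ) (hc : 0 < c)
    (β : ℝ) (hβ : 0 < β) :
    ∃ C₀ : ℝ, 0 < C₀ ∧
      ∀ h : EuclideanSpace ℝ (Fin m) × EuclideanSpace ℝ (Fin m) → ℝ,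
        LocallyIntegrable h volume →
        ∀ (x y : EuclideanSpace ℝ (Fin m) × EuclideanSpace ℝ (Fin m)) (r : ℝ × ℝ × ℝ),
          0 < r.1 → 0 < r.2.1 → 0 < r.2.2 →
          y ∈ tube m x (β * r.1, β * r.2.1, β * r.2.2) →
          ENNReal.ofReal |twConv m c r h y| ≤ ENNReal.ofReal C₀ * tubeMaximal m h x := by
  classical
  set Cfin : ℝ≥0∞ := ENNReal.ofReal ((2:ℝ) ^ (3 * (m + 1))) *
      ENNReal.ofReal ((2:ℝ) ^ (3 * (m + 1))) * (KB m c + KB m c) *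
      (Cterm m c β + Cterm m c β) with hCfin
  have hCfin_ne_top : Cfin ≠ ⊤ := by
    rw [hCfin]
    refine ENNReal.mul_ne_top (ENNReal.mul_ne_top
      (ENNReal.mul_ne_top ENNReal.ofReal_ne_top ENNReal.ofReal_ne_top) ?_) ?_
    · exact ENNReal.add_ne_top.mpr ⟨KB_ne_top, KB_ne_top⟩
    · exact ENNReal.add_ne_top.mpr ⟨Cterm_ne_top, Cterm_ne_top⟩
  refine ⟨Cfin.toReal + 1, by positivity, ?_⟩
  intro h hloc x y r h1 h2 h3 hy
  have hh : AEMeasurable (fun z : EuclideanSpace ℝ (Fin m) × EuclideanSpace ℝ (Fin m) =>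
      ENNReal.ofReal |h z|) volume := by
    have hm := hloc.aestronglyMeasurable.aemeasurable
    exact ENNReal.measurable_ofReal.comp_aemeasurable (measurable_abs.comp_aemeasurable hm)
  have hP : (0:ℝ) ≤ 2 ^ (3 * (m + 1)) := by positivity
  set F13 := fun z : EuclideanSpace ℝ (Fin m) × EuclideanSpace ℝ (Fin m) =>
    ENNReal.ofReal (qk m c (r.1 + r.2.2) ‖(y - z).1‖) with hF13
  set F12 := fun z : EuclideanSpace ℝ (Fin m) × EuclideanSpace ℝ (Fin m) =>
    ENNReal.ofReal (qk m c (r.1 + r.2.1) ‖(y - z).1 - (y - z).2‖) with hF12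
  set F23 := fun z : EuclideanSpace ℝ (Fin m) × EuclideanSpace ℝ (Fin m) =>
    ENNReal.ofReal (qk m c (r.2.1 + r.2.2) ‖(y - z).2‖) with hF23
  set H := fun z : EuclideanSpace ℝ (Fin m) × EuclideanSpace ℝ (Fin m) =>
    ENNReal.ofReal |h z| with hHdef
  have hmeasF : ∀ (s : ℝ), 0 < s →
      ∀ φ : EuclideanSpace ℝ (Fin m) × EuclideanSpace ℝ (Fin m) → EuclideanSpace ℝ (Fin m),
      Continuous φ → Measurable fun z : EuclideanSpace ℝ (Fin m) × EuclideanSpace ℝ (Fin m) =>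
        ENNReal.ofReal (qk m c s ‖φ (y - z)‖) := by
    intro s hs φ hφ
    apply Measurable.ennreal_ofReal
    unfold qk
    have hcont : Continuous fun z : EuclideanSpace ℝ (Fin m) × EuclideanSpace ℝ (Fin m) =>
        (s + ‖φ (y - z)‖) ^ (m + 1) :=
      (continuous_const.add (hφ.comp (continuous_const.sub continuous_id)).norm).pow _
    refine (continuous_const.div hcont ?_).measurable
    intro z
    have : (0:ℝ) < (s + ‖φ (y - z)‖) ^ (m + 1) := by positivity
    exact this.ne'
  have hs13 : 0 < r.1 + r.2.2 := by linarith
  have hs12 : 0 < r.1 + r.2.1 := by linarith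
  have hs23 : 0 < r.2.1 + r.2.2 := by linarith
  have hmeas13 : Measurable F13 := hmeasF _ hs13 (fun p => p.1) continuous_fst
  have hmeas12 : Measurable F12 := hmeasF _ hs12 (fun p => p.1 - p.2)
    (continuous_fst.sub continuous_snd)
  have hconst_ne : ENNReal.ofReal ((2:ℝ) ^ (3 * (m + 1))) *
      ENNReal.ofReal ((2:ℝ) ^ (3 * (m + 1))) * (KB m c + KB m c) ≠ ⊤ := by
    refine ENNReal.mul_ne_top
      (ENNReal.mul_ne_top ENNReal.ofReal_ne_top ENNReal.ofReal_ne_top) ?_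
    exact ENNReal.add_ne_top.mpr ⟨KB_ne_top, KB_ne_top⟩
  calc ENNReal.ofReal |twConv m c r h y|
      ≤ ∫⁻ z, ENNReal.ofReal |twPoi m c r (y - z)| * H z := by
        unfold twConv
        calc ENNReal.ofReal |∫ z, twPoi m c r (y - z) * h z|
            ≤ ENNReal.ofReal ((∫⁻ z, ENNReal.ofReal ‖twPoi m c r (y - z) * h z‖).toReal) := by
              apply ENNReal.ofReal_le_ofReal
              rw [← Real.norm_eq_abs]
              exact norm_integral_le_lintegral_norm _
          _ ≤ ∫⁻ z, ENNReal.ofReal ‖twPoi m c r (y - z) * h z‖ := ENNReal.ofReal_toReal_le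
          _ = ∫⁻ z, ENNReal.ofReal |twPoi m c r (y - z)| * H z := by
              apply lintegral_congr
              intro z
              rw [Real.norm_eq_abs, abs_mul, ENNReal.ofReal_mul (abs_nonneg _)]
    _ ≤ ∫⁻ z, (ENNReal.ofReal (2 ^ (3 * (m + 1)) * qk m c (r.1 + r.2.2) ‖(y - z).1‖) *
          (ENNReal.ofReal (2 ^ (3 * (m + 1)) * qk m c (r.1 + r.2.1) ‖(y - z).1 - (y - z).2‖) *
            (KB m c + KB m c)
            + ENNReal.ofReal (2 ^ (3 * (m + 1)) * qk m c (r.2.1 + r.2.2) ‖(y - z).2‖) *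
            (KB m c + KB m c))) * H z := by
        apply lintegral_mono
        intro z
        exact mul_le_mul' (twPoi_bound hc h1 h2 h3 (y - z)) le_rfl
    _ = ∫⁻ z, (ENNReal.ofReal ((2:ℝ) ^ (3 * (m + 1))) * ENNReal.ofReal ((2:ℝ) ^ (3 * (m + 1))) *
          (KB m c + KB m c)) * (F13 z * F12 z * H z + F13 z * F23 z * H z) := by
        apply lintegral_congr
        intro z
        rw [ENNReal.ofReal_mul hP, ENNReal.ofReal_mul hP, ENNReal.ofReal_mul hP]
        ring
    _ = (ENNReal.ofReal ((2:ℝ) ^ (3 * (m + 1))) * ENNReal.ofReal ((2:ℝ) ^ (3 * (m + 1))) *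
          (KB m c + KB m c)) * ∫⁻ z, (F13 z * F12 z * H z + F13 z * F23 z * H z) :=
        lintegral_const_mul' _ _ hconst_ne
    _ = (ENNReal.ofReal ((2:ℝ) ^ (3 * (m + 1))) * ENNReal.ofReal ((2:ℝ) ^ (3 * (m + 1))) *
          (KB m c + KB m c)) *
          ((∫⁻ z, F13 z * F12 z * H z) + ∫⁻ z, F13 z * F23 z * H z) := by
        congr 1
        exact lintegral_add_left' (((hmeas13.mul hmeas12).aemeasurable).mul hh) _
    _ ≤ (ENNReal.ofReal ((2:ℝ) ^ (3 * (m + 1))) * ENNReal.ofReal ((2:ℝ) ^ (3 * (m + 1))) *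
          (KB m c + KB m c)) *
          (Cterm m c β * tubeMaximal m h x + Cterm m c β * tubeMaximal m h x) := by
        apply mul_le_mul_right
        exact add_le_add (termA hc hβ h hh x y h1 h2 h3 hy) (termB hc hβ h hh x y h1 h2 h3 hy)
    _ = Cfin * tubeMaximal m h x := by
        rw [hCfin]
        ring
    _ ≤ ENNReal.ofReal (Cfin.toReal + 1) * tubeMaximal m h x := by
        apply mul_le_mul_left
        calc Cfin = ENNReal.ofReal Cfin.toReal := (ENNReal.ofReal_toReal hCfin_ne_top).symm
          _ ≤ ENNReal.ofReal (Cfin.toReal + 1) :=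
            ENNReal.ofReal_le_ofReal (by linarith [ENNReal.toReal_nonneg (a := Cfin)])

end
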